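/- Suppose α = 0 and β ≠ 0. Then the presented Lie algebra 𝔥(0,β) is a nilpotent Lie algebra of dimension at most 6. -/

import Mathlib

noncomputable section

variable (K : Type*) [Field K] [CharZero K]

/-- Generators of the free Lie algebra on three generators `A₀, A₁, Y`. -/
def genA₀ : FreeLieAlgebra K (Fin 3) := FreeLieAlgebra.of K 0
def genA₁ : FreeLieAlgebra K (Fin 3) := FreeLieAlgebra.of K 1
def genY : FreeLieAlgebra K (Fin 3) := FreeLieAlgebra.of K 2

variable (α β : K)

/-- The left-hand sides of the relations (R1)–(R6). -/
def weRelations : Set (FreeLieAlgebra K (Fin 3)) :=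
  { ⁅genA₁ K, ⁅genA₁ K, ⁅genA₀ K, genA₁ K⁆⁆⁆,
    (4 * α) • ⁅genA₀ K, genA₁ K⁆ + ⁅genA₀ K, ⁅genA₁ K, ⁅genA₀ K, genA₁ K⁆⁆⁆,
    ⁅genA₁ K, ⁅genA₁ K, ⁅genA₀ K, ⁅genA₀ K, ⁅genA₀ K, genA₁ K⁆⁆⁆⁆⁆,
    ⁅genA₁ K, ⁅genA₀ K, ⁅genA₀ K, ⁅genA₀ K, ⁅genA₀ K, genA₁ K⁆⁆⁆⁆⁆
      - β • ⁅genA₀ K, ⁅genA₀ K, ⁅genA₀ K, genA₁ K⁆⁆⁆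
      + ((1 : K) / 2) • ⁅genA₀ K, ⁅genA₁ K, ⁅genA₀ K, ⁅genA₀ K, ⁅genA₀ K, genA₁ K⁆⁆⁆⁆⁆,
    ⁅genA₁ K, genY K⁆ + ⁅genA₀ K, ⁅genA₀ K, ⁅genA₀ K, ⁅genA₀ K, ⁅genA₀ K, genA₁ K⁆⁆⁆⁆⁆,
    ⁅genA₀ K, genY K⁆ }

/-- The Lie ideal of the free Lie algebra generated by the relations (R1)–(R6). -/
def weIdeal : LieIdeal K (FreeLieAlgebra K (Fin 3)) :=
  LieSubmodule.lieSpan K (FreeLieAlgebra K (Fin 3)) (weRelations K α β)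

/-- The Wahlquist–Estabrook prolongation algebra `𝔥(α,β)`, presented by generators
`A₀, A₁, Y` and relations (R1)–(R6). -/
abbrev WEAlgebra := FreeLieAlgebra K (Fin 3) ⧸ weIdeal K α β

namespace WEAux

set_option linter.unusedSectionVars false

/-- The quotient map as a Lie algebra homomorphism. -/
def π : FreeLieAlgebra K (Fin 3) →ₗ⁅K⁆ WEAlgebra K 0 β :=
  { (weIdeal K 0 β).toSubmodule.mkQ with
    map_lie' := rfl }

lemma π_rel {x : FreeLieAlgebra K (Fin 3)} (hx : x ∈ weRelations K 0 β) : π K β x = 0 :=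
  (LieSubmodule.Quotient.mk_eq_zero' (N := weIdeal K 0 β)).mpr
    (LieSubmodule.subset_lieSpan hx)

def a0 : WEAlgebra K 0 β := π K β (genA₀ K)
def a1 : WEAlgebra K 0 β := π K β (genA₁ K)
def yv : WEAlgebra K 0 β := π K β (genY K)
def b1 : WEAlgebra K 0 β := ⁅a0 K β, a1 K β⁆
def b2 : WEAlgebra K 0 β := ⁅a0 K β, b1 K β⁆
def b3 : WEAlgebra K 0 β := ⁅a0 K β, b2 K β⁆
def b4 : WEAlgebra K 0 β := ⁅a0 K β, b3 K β⁆
def b5 : WEAlgebra K 0 β := ⁅a0 K β, b4 K β⁆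
def b6 : WEAlgebra K 0 β := ⁅a0 K β, b5 K β⁆
def cc : WEAlgebra K 0 β := ⁅a1 K β, b1 K β⁆
def ee : WEAlgebra K 0 β := ⁅b1 K β, b2 K β⁆

section Derivation

variable {K : Type*} [Field K] [CharZero K] {β : K}

local notation "A0" => a0 K β
local notation "A1" => a1 K β
local notation "Yv" => yv K β
local notation "B1" => b1 K β
local notation "B2" => b2 K β
local notation "B3" => b3 K β
local notation "B4" => b4 K β
local notation "B5" => b5 K β
local notation "B6" => b6 K β
local notation "C" => cc K β
local notation "E" => ee K β

lemma b1_def : B1 = ⁅A0, A1⁆ := rfl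
lemma b2_def : B2 = ⁅A0, B1⁆ := rfl
lemma b3_def : B3 = ⁅A0, B2⁆ := rfl
lemma b4_def : B4 = ⁅A0, B3⁆ := rfl
lemma b5_def : B5 = ⁅A0, B4⁆ := rfl
lemma b6_def : B6 = ⁅A0, B5⁆ := rfl
lemma cc_def : C = ⁅A1, B1⁆ := rfl
lemma ee_def : E = ⁅B1, B2⁆ := rfl

lemma q1 : ⁅A1, C⁆ = 0 := by
  have := π_rel K β (x := ⁅genA₁ K, ⁅genA₁ K, ⁅genA₀ K, genA₁ K⁆⁆⁆) (by left; rfl)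
  simpa [a1, a0, b1, cc, LieHom.map_lie] using this

lemma q2 : ⁅A0, C⁆ = 0 := by
  have := π_rel K β
    (x := (4 * (0:K)) • ⁅genA₀ K, genA₁ K⁆ + ⁅genA₀ K, ⁅genA₁ K, ⁅genA₀ K, genA₁ K⁆⁆⁆)
    (by right; left; rfl)
  simpa [a1, a0, b1, cc, LieHom.map_lie] using this

lemma q3 : ⁅A1, ⁅A1, B3⁆⁆ = 0 := by
  have := π_rel K β
    (x := ⁅genA₁ K, ⁅genA₁ K, ⁅genA₀ K, ⁅genA₀ K, ⁅genA₀ K, genA₁ K⁆⁆⁆⁆⁆)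
    (by right; right; left; rfl)
  simpa [a1, a0, b1, b2, b3, LieHom.map_lie] using this

lemma q4 : ⁅A1, B4⁆ - β • B3 + ((1:K)/2) • ⁅A0, ⁅A1, B3⁆⁆ = 0 := by
  have := π_rel K β
    (x := ⁅genA₁ K, ⁅genA₀ K, ⁅genA₀ K, ⁅genA₀ K, ⁅genA₀ K, genA₁ K⁆⁆⁆⁆⁆
      - β • ⁅genA₀ K, ⁅genA₀ K, ⁅genA₀ K, genA₁ K⁆⁆⁆
      + ((1 : K) / 2) • ⁅genA₀ K, ⁅genA₁ K, ⁅genA₀ K, ⁅genA₀ K, ⁅genA₀ K, genA₁ K⁆⁆⁆⁆⁆)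
    (by right; right; right; left; rfl)
  simpa [a1, a0, b1, b2, b3, b4, LieHom.map_lie] using this

lemma q5 : ⁅A1, Yv⁆ + B5 = 0 := by
  have := π_rel K β
    (x := ⁅genA₁ K, genY K⁆ + ⁅genA₀ K, ⁅genA₀ K, ⁅genA₀ K, ⁅genA₀ K, ⁅genA₀ K, genA₁ K⁆⁆⁆⁆⁆)
    (by right; right; right; right; left; rfl)
  simpa [a1, a0, yv, b1, b2, b3, b4, b5, LieHom.map_lie] using this

lemma q6 : ⁅A0, Yv⁆ = 0 := by
  have := π_rel K β (x := ⁅genA₀ K, genY K⁆)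
    (by right; right; right; right; right; rfl)
  simpa [a0, yv, LieHom.map_lie] using this

lemma q5' : ⁅A1, Yv⁆ = -B5 := by
  linear_combination (norm := module) q5 (K := K) (β := β)

-- (l1)  ⁅A1, B2⁆ = 0
lemma l1 : ⁅A1, B2⁆ = 0 := by
  have h := q2 (K := K) (β := β)
  rw [cc_def, leibniz_lie, ← b1_def, ← b2_def, lie_self, zero_add] at h
  exact h

-- (l2)  ⁅A1, B3⁆ = -E
lemma l2 : ⁅A1, B3⁆ = -E := by
  have h : ⁅A0, ⁅A1, B2⁆⁆ = (0 : WEAlgebra K 0 β) := by rw [l1, lie_zero]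
  rw [leibniz_lie, ← b1_def, ← b3_def, ← ee_def] at h
  linear_combination (norm := module) h

-- (l3)  ⁅A1, E⁆ = 0
lemma l3 : ⁅A1, E⁆ = 0 := by
  have h := q3 (K := K) (β := β)
  rw [l2, lie_neg, neg_eq_zero] at h
  exact h

-- (l4)  ⁅C, B2⁆ = 0
lemma l4 : ⁅C, B2⁆ = 0 := by
  have h := l3 (K := K) (β := β)
  rw [ee_def, leibniz_lie, ← cc_def, l1, lie_zero, add_zero] at h
  exact h


-- (l5) ⁅C, B3⁆ = 0
lemma l5 : ⁅C, B3⁆ = 0 := by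
  have h : ⁅A0, ⁅C, B2⁆⁆ = (0 : WEAlgebra K 0 β) := by rw [l4, lie_zero]
  rw [leibniz_lie, q2, zero_lie, zero_add, ← b3_def] at h
  exact h

-- (l6) ⁅C, B4⁆ = 0
lemma l6 : ⁅C, B4⁆ = 0 := by
  have h : ⁅A0, ⁅C, B3⁆⁆ = (0 : WEAlgebra K 0 β) := by rw [l5, lie_zero]
  rw [leibniz_lie, q2, zero_lie, zero_add, ← b4_def] at h
  exact h

-- (l7) ⁅C, B5⁆ = 0
lemma l7 : ⁅C, B5⁆ = 0 := by
  have h : ⁅A0, ⁅C, B4⁆⁆ = (0 : WEAlgebra K 0 β) := by rw [l6, lie_zero]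
  rw [leibniz_lie, q2, zero_lie, zero_add, ← b5_def] at h
  exact h

-- (l8) ⁅A0, E⁆ = ⁅B1, B3⁆
lemma l8 : ⁅A0, E⁆ = ⁅B1, B3⁆ := by
  rw [ee_def, leibniz_lie, ← b2_def, lie_self, zero_add, ← b3_def]

-- (l9') ⁅A0, ⁅A1, B3⁆⁆ = -⁅B1, B3⁆
lemma l9' : ⁅A0, ⁅A1, B3⁆⁆ = -⁅B1, B3⁆ := by
  rw [l2, lie_neg, l8]

-- (l9) ⁅A1, B4⁆ = (-2 : K) • ⁅B1, B3⁆
lemma l9 : ⁅A1, B4⁆ = (-2 : K) • ⁅B1, B3⁆ := by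
  have h1 : ⁅A0, ⁅A1, B3⁆⁆ = ⁅B1, B3⁆ + ⁅A1, B4⁆ := by
    rw [leibniz_lie, ← b1_def, ← b4_def]
  rw [l9'] at h1
  linear_combination (norm := module) -h1

-- (l10) ⁅B1, B3⁆ = (-(2:K)/5*β) • B3
lemma l10 : ⁅B1, B3⁆ = (-(2:K)/5*β) • B3 := by
  have h := q4 (K := K) (β := β)
  rw [l9, l9'] at h
  linear_combination (norm := module) (-(2:K)/5) • h

-- (l11) ⁅B2, B3⁆ + ⁅B1, B4⁆ = (-(2:K)/5*β) • B4
lemma l11 : ⁅B2, B3⁆ + ⁅B1, B4⁆ = (-(2:K)/5*β) • B4 := by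
  have h : ⁅A0, ⁅B1, B3⁆⁆ = ⁅A0, (-(2:K)/5*β) • B3⁆ := by rw [l10]
  rw [leibniz_lie, ← b2_def, ← b4_def, lie_smul, ← b4_def] at h
  exact h

-- (l12) ⁅B2, E⁆ = 0
lemma l12 : ⁅B2, E⁆ = 0 := by
  have hA : ⁅A1, ⁅B2, B3⁆⁆ = -⁅B2, E⁆ := by
    rw [leibniz_lie, l1, zero_lie, zero_add, l2, lie_neg]
  have hB : ⁅A1, ⁅B1, B4⁆⁆ = ((-2:K) * (-(2:K)/5*β) * (-(2:K)/5*β)) • B3 := by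
    rw [leibniz_lie, ← cc_def, l6, zero_add, l9, lie_smul, l10, lie_smul, l10]
    module
  have h : ⁅A1, ⁅B2, B3⁆ + ⁅B1, B4⁆⁆ = ⁅A1, (-(2:K)/5*β) • B4⁆ := by rw [l11]
  rw [lie_add, hA, hB, lie_smul, l9, smul_smul, l10] at h
  linear_combination (norm := module) -h

-- (l13) ⁅B3, E⁆ = ((2:K)/5*β) • ⁅B2, B3⁆
lemma l13 : ⁅B3, E⁆ = ((2:K)/5*β) • ⁅B2, B3⁆ := by
  have h : ⁅A0, ⁅B2, E⁆⁆ = (0 : WEAlgebra K 0 β) := by rw [l12, lie_zero]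
  rw [leibniz_lie, ← b3_def, l8, l10] at h
  rw [lie_smul] at h
  linear_combination (norm := module) h

-- (l14) ⁅A1, B5⁆ = ⁅B2, B3⁆ - ((3:K)*(-(2:K)/5*β)) • B4
lemma l14 : ⁅A1, B5⁆ = ⁅B2, B3⁆ - ((3:K)*(-(2:K)/5*β)) • B4 := by
  have h1 : ⁅A0, ⁅A1, B4⁆⁆ = ⁅B1, B4⁆ + ⁅A1, B5⁆ := by
    rw [leibniz_lie, ← b1_def, ← b5_def]
  have h2 : ⁅A0, ⁅A1, B4⁆⁆ = (-2:K) • (⁅B2, B3⁆ + ⁅B1, B4⁆) := by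
    rw [l9, lie_smul, leibniz_lie, ← b2_def, ← b4_def]
  have h3 := l11 (K := K) (β := β)
  rw [h2] at h1
  linear_combination (norm := module) -h1 - (3:K) • h3

-- (l15) ⁅B1, Yv⁆ = -B6
lemma l15 : ⁅B1, Yv⁆ = -B6 := by
  rw [b1_def, lie_lie, q5', q6, lie_zero, sub_zero, lie_neg, ← b6_def]

-- (l16) ⁅A1, B6⁆ = ⁅B2, B4⁆ - ((3:K)*(-(2:K)/5*β)) • B5 - ⁅B1, B5⁆
lemma l16 : ⁅A1, B6⁆ = ⁅B2, B4⁆ - ((3:K)*(-(2:K)/5*β)) • B5 - ⁅B1, B5⁆ := by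
  have h1 : ⁅A0, ⁅A1, B5⁆⁆ = ⁅B1, B5⁆ + ⁅A1, B6⁆ := by
    rw [leibniz_lie, ← b1_def, ← b6_def]
  have h2 : ⁅A0, ⁅A1, B5⁆⁆ = ⁅B2, B4⁆ - ((3:K)*(-(2:K)/5*β)) • B5 := by
    rw [l14, lie_sub, lie_smul, ← b5_def, leibniz_lie, ← b3_def, ← b4_def, lie_self, zero_add]
  rw [h2] at h1
  linear_combination (norm := module) -h1

-- (l17) value of ⁅C, Yv⁆
lemma l17 : ⁅C, Yv⁆ = -⁅B2, B4⁆ + ((3:K)*(-(2:K)/5*β)) • B5 + (2:K) • ⁅B1, B5⁆ := by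
  have h : ⁅C, Yv⁆ = -⁅A1, B6⁆ + ⁅B1, B5⁆ := by
    rw [cc_def, lie_lie, l15, q5', lie_neg, lie_neg]
    module
  rw [l16] at h
  linear_combination (norm := module) h

-- (l18) ⁅A1, ⁅C, Yv⁆⁆ = 0
lemma l18 : ⁅A1, ⁅C, Yv⁆⁆ = 0 := by
  rw [leibniz_lie, q1, zero_lie, zero_add, q5', lie_neg, l7, neg_zero]

-- (l19)
lemma l19 : ⁅A1, ⁅B2, B4⁆⁆ = ((-2:K)*(-(2:K)/5*β)) • ⁅B2, B3⁆ := by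
  rw [leibniz_lie, l1, zero_lie, zero_add, l9, lie_smul, l10, lie_smul]
  module

-- (l20)
lemma l20 : ⁅B1, ⁅B2, B3⁆⁆ = ((2:K)*(-(2:K)/5*β)) • ⁅B2, B3⁆ := by
  have hE : ⁅E, B3⁆ = (-(2:K)/5*β) • ⁅B2, B3⁆ := by
    rw [← lie_skew, l13]
    module
  rw [leibniz_lie, ← ee_def, l10, lie_smul, hE]
  module

-- (l21)
lemma l21 : ⁅A1, ⁅B1, B5⁆⁆ =
    ((5:K)*(-(2:K)/5*β)) • ⁅B2, B3⁆ - ((3:K)*(-(2:K)/5*β)*(-(2:K)/5*β)) • B4 := by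
  rw [leibniz_lie, ← cc_def, l7, zero_add, l14, lie_sub, lie_smul, l20]
  linear_combination (norm := module) ((-3:K)*(-(2:K)/5*β)) • l11 (K := K) (β := β)

-- (l22)
lemma l22 (hβ : β ≠ 0) : ⁅B2, B3⁆ = (-(2:K)/5*β) • B4 := by
  have h := l18 (K := K) (β := β)
  rw [l17] at h
  simp only [lie_add, lie_neg, lie_smul] at h
  rw [l19, l14, l21] at h
  have h2 : ((15:K)*(-(2:K)/5*β)) • (⁅B2, B3⁆ - (-(2:K)/5*β) • B4) = 0 := by
    linear_combination (norm := module) h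
  rcases smul_eq_zero.mp h2 with h3 | h3
  · exact absurd h3 (by field_simp; simp [hβ])
  · exact sub_eq_zero.mp h3

-- (l23)
lemma l23 (hβ : β ≠ 0) : ⁅B1, B4⁆ = 0 := by
  linear_combination (norm := module) l11 (K := K) (β := β) - l22 hβ

-- (l24): the key fact B3 = 0.
lemma l24 (hβ : β ≠ 0) : B3 = 0 := by
  have h : ⁅A1, ⁅B1, B4⁆⁆ = (0 : WEAlgebra K 0 β) := by rw [l23 hβ, lie_zero]
  rw [leibniz_lie, ← cc_def, l6, zero_add, l9, lie_smul, l10, lie_smul, l10] at h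
  have h2 : ((-2:K)*(-(2:K)/5*β)*(-(2:K)/5*β)) • B3 = 0 := by
    linear_combination (norm := module) h
  rcases smul_eq_zero.mp h2 with h3 | h3
  · exact absurd h3 (by field_simp; simp [hβ])
  · exact h3

-- consequences
lemma c_b4 (hβ : β ≠ 0) : B4 = 0 := by rw [b4_def, l24 hβ, lie_zero]
lemma c_b5 (hβ : β ≠ 0) : B5 = 0 := by rw [b5_def, c_b4 hβ, lie_zero]
lemma c_b6 (hβ : β ≠ 0) : B6 = 0 := by rw [b6_def, c_b5 hβ, lie_zero]
lemma c_ee (hβ : β ≠ 0) : E = 0 := by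
  have h := l2 (K := K) (β := β)
  rw [l24 hβ, lie_zero] at h
  simpa using h.symm
lemma c_a0b2 (hβ : β ≠ 0) : ⁅A0, B2⁆ = 0 := by rw [← b3_def, l24 hβ]
lemma c_a1yv (hβ : β ≠ 0) : ⁅A1, Yv⁆ = 0 := by rw [q5', c_b5 hβ, neg_zero]
lemma c_b1yv (hβ : β ≠ 0) : ⁅B1, Yv⁆ = 0 := by rw [l15, c_b6 hβ, neg_zero]
lemma c_b2yv (hβ : β ≠ 0) : ⁅B2, Yv⁆ = 0 := by
  rw [b2_def, lie_lie, c_b1yv hβ, lie_zero, q6, lie_zero, sub_zero]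
lemma c_ccyv (hβ : β ≠ 0) : ⁅C, Yv⁆ = 0 := by
  rw [l17, c_b4 hβ, c_b5 hβ, lie_zero]
  simp
lemma c_b1b2 (hβ : β ≠ 0) : ⁅B1, B2⁆ = 0 := by rw [← ee_def, c_ee hβ]
lemma c_b1cc : ⁅B1, C⁆ = 0 := by
  rw [b1_def, lie_lie, q1, q2, lie_zero, lie_zero, sub_zero]
lemma c_b2cc : ⁅B2, C⁆ = 0 := by rw [← lie_skew, l4, neg_zero]

lemma zrev {x y : WEAlgebra K 0 β} (h : ⁅x, y⁆ = 0) : ⁅y, x⁆ = 0 := by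
  rw [← lie_skew, h, neg_zero]

/-- Bilinear extension of a bracket table. -/
lemma bracket_span {s t : Set (WEAlgebra K 0 β)} {T : Submodule K (WEAlgebra K 0 β)}
    (h : ∀ u ∈ s, ∀ v ∈ t, ⁅u, v⁆ ∈ T) :
    ∀ x ∈ Submodule.span K s, ∀ y ∈ Submodule.span K t, ⁅x, y⁆ ∈ T := by
  intro x hx y hy
  refine Submodule.span_induction (p := fun x _ => ⁅x, y⁆ ∈ T) ?_ ?_ ?_ ?_ hx
  · intro u hu
    refine Submodule.span_induction (p := fun y _ => ⁅u, y⁆ ∈ T) ?_ ?_ ?_ ?_ hy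
    · intro v hv; exact h u hu v hv
    · simp
    · intro y1 y2 _ _ h1 h2; rw [lie_add]; exact T.add_mem h1 h2
    · intro a y1 _ h1; rw [lie_smul]; exact T.smul_mem a h1
  · simp
  · intro x1 x2 _ _ h1 h2; rw [add_lie]; exact T.add_mem h1 h2
  · intro a x1 _ h1; rw [smul_lie]; exact T.smul_mem a h1

lemma v_a0a1 : ⁅A0, A1⁆ = B1 := rfl
lemma v_a1a0 : ⁅A1, A0⁆ = -B1 := by rw [← lie_skew, b1_def]
lemma v_a0b1 : ⁅A0, B1⁆ = B2 := rfl
lemma v_b1a0 : ⁅B1, A0⁆ = -B2 := by rw [← lie_skew, b2_def]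
lemma v_a1b1 : ⁅A1, B1⁆ = C := rfl
lemma v_b1a1 : ⁅B1, A1⁆ = -C := by rw [← lie_skew, cc_def]

/-- The master table: all brackets of the six spanning elements lie in `span {B1, B2, C}`. -/
lemma tab1 (hβ : β ≠ 0) :
    ∀ u ∈ ({A0, A1, Yv, B1, B2, C} : Set (WEAlgebra K 0 β)),
      ∀ v ∈ ({A0, A1, Yv, B1, B2, C} : Set (WEAlgebra K 0 β)),
        ⁅u, v⁆ ∈ Submodule.span K ({B1, B2, C} : Set (WEAlgebra K 0 β)) := by
  intro u hu v hv
  simp only [Set.mem_insert_iff, Set.mem_singleton_iff] at hu hv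
  rcases hu with rfl | rfl | rfl | rfl | rfl | rfl <;>
    rcases hv with rfl | rfl | rfl | rfl | rfl | rfl <;>
    simp only [lie_self, v_a0a1, v_a1a0, v_a0b1, v_b1a0, v_a1b1, v_b1a1,
      q1, q2, q6, l1, l4, c_a0b2 hβ, c_a1yv hβ, c_b1yv hβ, c_b2yv hβ, c_ccyv hβ,
      c_b1b2 hβ, c_b1cc, c_b2cc,
      zrev q1, zrev q2, zrev q6, zrev (l1 (K := K) (β := β)), zrev (l4 (K := K) (β := β)),
      zrev (c_a0b2 hβ), zrev (c_a1yv hβ), zrev (c_b1yv hβ), zrev (c_b2yv hβ),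
      zrev (c_ccyv hβ), zrev (c_b1b2 hβ), zrev (c_b1cc (K := K) (β := β)),
      zrev (c_b2cc (K := K) (β := β))] <;>
    first
      | exact zero_mem _
      | exact Submodule.subset_span (Set.mem_insert _ _)
      | exact Submodule.subset_span (Set.mem_insert_of_mem _ (Set.mem_insert _ _))
      | exact Submodule.subset_span (Set.mem_insert_of_mem _ (Set.mem_insert_of_mem _ rfl))
      | exact Submodule.neg_mem _ (Submodule.subset_span (Set.mem_insert _ _))
      | exact Submodule.neg_mem _ (Submodule.subset_span (Set.mem_insert_of_mem _ (Set.mem_insert _ _)))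
      | exact Submodule.neg_mem _ (Submodule.subset_span (Set.mem_insert_of_mem _ (Set.mem_insert_of_mem _ rfl)))

lemma tab2 (hβ : β ≠ 0) :
    ∀ u ∈ ({A0, A1, Yv, B1, B2, C} : Set (WEAlgebra K 0 β)),
      ∀ v ∈ ({B1, B2, C} : Set (WEAlgebra K 0 β)),
        ⁅u, v⁆ ∈ Submodule.span K ({B2, C} : Set (WEAlgebra K 0 β)) := by
  intro u hu v hv
  simp only [Set.mem_insert_iff, Set.mem_singleton_iff] at hu hv
  rcases hu with rfl | rfl | rfl | rfl | rfl | rfl <;>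
    rcases hv with rfl | rfl | rfl <;>
    simp only [lie_self, v_a0b1, v_a1b1,
      q1, q2, l1, l4, c_a0b2 hβ, c_b1b2 hβ, c_b1cc, c_b2cc,
      zrev (c_b1yv hβ), zrev (c_b2yv hβ), zrev (c_ccyv hβ),
      zrev (c_b1b2 hβ), zrev (c_b1cc (K := K) (β := β)),
      zrev (c_b2cc (K := K) (β := β)), zrev (l4 (K := K) (β := β))] <;>
    first
      | exact zero_mem _
      | exact Submodule.subset_span (Set.mem_insert _ _)
      | exact Submodule.subset_span (Set.mem_insert_of_mem _ rfl)

lemma tab3 (hβ : β ≠ 0) :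
    ∀ u ∈ ({A0, A1, Yv, B1, B2, C} : Set (WEAlgebra K 0 β)),
      ∀ v ∈ ({B2, C} : Set (WEAlgebra K 0 β)),
        ⁅u, v⁆ ∈ (⊥ : Submodule K (WEAlgebra K 0 β)) := by
  intro u hu v hv
  simp only [Set.mem_insert_iff, Set.mem_singleton_iff] at hu hv
  rw [Submodule.mem_bot]
  rcases hu with rfl | rfl | rfl | rfl | rfl | rfl <;>
    rcases hv with rfl | rfl <;>
    simp only [lie_self, q1, q2, l1, l4, c_a0b2 hβ, c_b1b2 hβ, c_b1cc, c_b2cc,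
      zrev (c_b2yv hβ), zrev (c_ccyv hβ), zrev (c_b2cc (K := K) (β := β)),
      zrev (l4 (K := K) (β := β))]

theorem main (hβ : β ≠ 0) :
    LieModule.IsNilpotent (WEAlgebra K 0 β) (WEAlgebra K 0 β) ∧
      Module.rank K (WEAlgebra K 0 β) ≤ 6 := by
  set S : Set (WEAlgebra K 0 β) := {A0, A1, Yv, B1, B2, C} with hSdef
  -- the span of S is closed under brackets
  have hsub1 : ({B1, B2, C} : Set (WEAlgebra K 0 β)) ⊆ S := by
    intro x hx
    simp only [Set.mem_insert_iff, Set.mem_singleton_iff, hSdef] at hx ⊢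
    tauto
  have hclosed : ∀ x ∈ Submodule.span K S, ∀ y ∈ Submodule.span K S,
      ⁅x, y⁆ ∈ Submodule.span K S := fun x hx y hy =>
    Submodule.span_mono hsub1 (bracket_span (tab1 hβ) x hx y hy)
  -- the corresponding Lie subalgebra
  let LS : LieSubalgebra K (WEAlgebra K 0 β) :=
    { Submodule.span K S with
      lie_mem' := fun hx hy => hclosed _ hx _ hy }
  have hmem : ∀ i : Fin 3, π K β (FreeLieAlgebra.of K i) ∈ LS := by
    intro i
    fin_cases i
    · exact Submodule.subset_span (Set.mem_insert _ _)
    · exact Submodule.subset_span (Set.mem_insert_of_mem _ (Set.mem_insert _ _))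
    · exact Submodule.subset_span
        (Set.mem_insert_of_mem _ (Set.mem_insert_of_mem _ (Set.mem_insert _ _)))
  let f : FreeLieAlgebra K (Fin 3) →ₗ⁅K⁆ LS :=
    FreeLieAlgebra.lift K fun i => (⟨π K β (FreeLieAlgebra.of K i), hmem i⟩ : LS)
  have hcomp : LS.incl.comp f = π K β := by
    apply FreeLieAlgebra.hom_ext
    intro i
    simp [f, FreeLieAlgebra.lift_of_apply]
  have hspan : ∀ q : WEAlgebra K 0 β, q ∈ Submodule.span K S := by
    intro q
    obtain ⟨w, rfl⟩ := LieSubmodule.Quotient.surjective_mk' (weIdeal K 0 β) q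
    have h1 : π K β w = LieSubmodule.Quotient.mk' (weIdeal K 0 β) w := rfl
    rw [← h1, ← LieHom.congr_fun hcomp w]
    exact (f w).2
  have hTop : Submodule.span K S = ⊤ := Submodule.eq_top_iff'.2 hspan
  constructor
  · -- nilpotency
    have hlcs1 : ∀ m ∈ LieModule.lowerCentralSeries K (WEAlgebra K 0 β) (WEAlgebra K 0 β) 1,
        m ∈ Submodule.span K ({B1, B2, C} : Set (WEAlgebra K 0 β)) := by
      intro m hm
      rw [show (1:ℕ) = 0 + 1 from rfl, LieModule.lowerCentralSeries_succ, LieModule.lowerCentralSeries_zero,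
        ← LieSubmodule.mem_toSubmodule, LieSubmodule.lieIdeal_oper_eq_linear_span'] at hm
      refine Submodule.span_le.mpr ?_ hm
      rintro z ⟨x, -, n, -, rfl⟩
      exact bracket_span (tab1 hβ) x (hspan x) n (hspan n)
    have hlcs2 : ∀ m ∈ LieModule.lowerCentralSeries K (WEAlgebra K 0 β) (WEAlgebra K 0 β) 2,
        m ∈ Submodule.span K ({B2, C} : Set (WEAlgebra K 0 β)) := by
      intro m hm
      rw [show (2:ℕ) = 1 + 1 from rfl, LieModule.lowerCentralSeries_succ,
        ← LieSubmodule.mem_toSubmodule, LieSubmodule.lieIdeal_oper_eq_linear_span'] at hm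
      refine Submodule.span_le.mpr ?_ hm
      rintro z ⟨x, -, n, hn, rfl⟩
      exact bracket_span (tab2 hβ) x (hspan x) n (hlcs1 n hn)
    refine (LieModule.isNilpotent_iff K _ _).mpr ⟨3, ?_⟩
    show LieModule.lowerCentralSeries K (WEAlgebra K 0 β) (WEAlgebra K 0 β) (2 + 1) = ⊥
    rw [LieModule.lowerCentralSeries_succ, LieSubmodule.lie_eq_bot_iff]
    intro x _ m hm
    have := bracket_span (tab3 hβ) x (hspan x) m (hlcs2 m hm)
    simpa using this
  · -- rank at most 6
    have h1 : Module.rank K (WEAlgebra K 0 β) =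
        Module.rank K (Submodule.span K S) := by
      rw [hTop]
      exact (rank_top K _).symm
    rw [h1]
    refine (rank_span_le _).trans ?_
    have h2 : Cardinal.mk S ≤ 6 := by
      have i1 := Cardinal.mk_insert_le (a := A0) (s := ({A1, Yv, B1, B2, C} : Set (WEAlgebra K 0 β)))
      have i2 := Cardinal.mk_insert_le (a := A1) (s := ({Yv, B1, B2, C} : Set (WEAlgebra K 0 β)))
      have i3 := Cardinal.mk_insert_le (a := Yv) (s := ({B1, B2, C} : Set (WEAlgebra K 0 β)))
      have i4 := Cardinal.mk_insert_le (a := B1) (s := ({B2, C} : Set (WEAlgebra K 0 β)))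
      have i5 := Cardinal.mk_insert_le (a := B2) (s := ({C} : Set (WEAlgebra K 0 β)))
      have i6 : Cardinal.mk ({C} : Set (WEAlgebra K 0 β)) = 1 := Cardinal.mk_singleton _
      calc Cardinal.mk S ≤ Cardinal.mk ({A1, Yv, B1, B2, C} : Set (WEAlgebra K 0 β)) + 1 := i1
        _ ≤ (Cardinal.mk ({Yv, B1, B2, C} : Set (WEAlgebra K 0 β)) + 1) + 1 := by
            exact add_le_add_left i2 1
        _ ≤ ((Cardinal.mk ({B1, B2, C} : Set (WEAlgebra K 0 β)) + 1) + 1) + 1 := by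
            exact add_le_add_left (add_le_add_left i3 1) 1
        _ ≤ (((Cardinal.mk ({B2, C} : Set (WEAlgebra K 0 β)) + 1) + 1) + 1) + 1 := by
            exact add_le_add_left (add_le_add_left (add_le_add_left i4 1) 1) 1
        _ ≤ ((((Cardinal.mk ({C} : Set (WEAlgebra K 0 β)) + 1) + 1) + 1) + 1) + 1 := by
            exact add_le_add_left (add_le_add_left (add_le_add_left (add_le_add_left i5 1) 1) 1) 1
        _ = 6 := by rw [i6]; norm_num
    exact h2

end Derivation

end WEAux

/-- For `α = 0` and `β ≠ 0`, the presented Lie algebra `𝔥(0,β)` is a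
nilpotent Lie algebra of dimension at most 6. -/
theorem stmt_11 (hβ : β ≠ 0) :
    LieModule.IsNilpotent (WEAlgebra K 0 β) (WEAlgebra K 0 β) ∧
    Module.rank K (WEAlgebra K 0 β) ≤ 6 := by
  exact WEAux.main hβ

end
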